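/- Let H₁, H₂ be commutative multiplicative hyperrings with identities, and P₁, P₂ nonzero proper strong C-hyperideals of H₁, H₂ respectively. Then P₁ × P₂ is an sdf-absorbing hyperideal of H₁ × H₂ if and only if P₁ and P₂ are sdf-absorbing hyperideals of H₁ and H₂ respectively, and 1_{H₁} + 1_{H₁} ∈ P₁ or 1_{H₂} + 1_{H₂} ∈ P₂. -/
import Mathlib


open Pointwise

/-- A commutative multiplicative hyperring structure on an abelian group `H`. -/
structure MulHyperring (H : Type*) [AddCommGroup H] where
  hmul : H → H → Set H
  hmul_nonempty : ∀ x y : H, (hmul x y).Nonempty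
  hmul_comm : ∀ x y : H, hmul x y = hmul y x
  hmul_assoc : ∀ x y z : H, (⋃ a ∈ hmul y z, hmul x a) = ⋃ b ∈ hmul x y, hmul b z
  hmul_distrib : ∀ x y z : H, hmul x (y + z) ⊆ hmul x y + hmul x z
  hmul_neg : ∀ x y : H, hmul x (-y) = -(hmul x y)

namespace Hyper

variable {H : Type*} [AddCommGroup H] (mul : H → H → Set H)

/-- `P` is a hyperideal. -/
def IsIdeal (P : Set H) : Prop :=
  (0 : H) ∈ P ∧ (∀ x ∈ P, ∀ y ∈ P, x - y ∈ P) ∧ ∀ r : H, ∀ x ∈ P, mul r x ⊆ P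

/-- Hyperproduct `a ∘ b₁ ∘ ⋯ ∘ bₙ`. -/
def hprod : H → List H → Set H
  | a, [] => {a}
  | a, b :: l => ⋃ t ∈ mul a b, hprod t l

/-- `C` is a finite hyperproduct `c₁ ∘ ⋯ ∘ cₙ`. -/
def IsProduct (C : Set H) : Prop := ∃ (a : H) (l : List H), C = hprod mul a l

/-- `D` is a finite (nonempty) sum of finite hyperproducts. -/
def IsSum (D : Set H) : Prop :=
  ∃ L : List (Set H), L ≠ [] ∧ (∀ C ∈ L, IsProduct mul C) ∧ D = L.sum

/-- `P` is a `𝒞`-hyperideal. -/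
def IsCIdeal (P : Set H) : Prop :=
  IsIdeal mul P ∧ ∀ C : Set H, IsProduct mul C → (C ∩ P).Nonempty → C ⊆ P

/-- `P` is a strong `𝒞`-hyperideal. -/
def IsStrongCIdeal (P : Set H) : Prop :=
  IsIdeal mul P ∧ ∀ D : Set H, IsSum mul D → (D ∩ P).Nonempty → D ⊆ P

/-- The hypersquare `x² = x ∘ x`. -/
def sq (x : H) : Set H := mul x x

/-- `P` is an sdf-absorbing hyperideal. -/
def IsSdf (P : Set H) : Prop :=
  IsIdeal mul P ∧ P ≠ Set.univ ∧
    ∀ x y : H, x ≠ 0 → y ≠ 0 → sq mul x - sq mul y ⊆ P → x - y ∈ P ∨ x + y ∈ P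

/-- `P` is a weakly sdf-absorbing hyperideal. -/
def IsWeaklySdf (P : Set H) : Prop :=
  IsIdeal mul P ∧ P ≠ Set.univ ∧
    ∀ x y : H, x ≠ 0 → y ≠ 0 → (0 : H) ∉ sq mul x - sq mul y →
      sq mul x - sq mul y ⊆ P → x - y ∈ P ∨ x + y ∈ P

/-- `P` is a prime hyperideal. -/
def IsPrime (P : Set H) : Prop :=
  IsIdeal mul P ∧ P ≠ Set.univ ∧ ∀ x y : H, mul x y ⊆ P → x ∈ P ∨ y ∈ P

/-- The radical: intersection of the prime hyperideals containing `P`. -/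
def rad (P : Set H) : Set H := ⋂₀ {Q : Set H | IsPrime mul Q ∧ P ⊆ Q}

/-- `hpow mul x n` is the hyperpower `x^(n+1)`. -/
def hpow (x : H) (n : ℕ) : Set H := hprod mul x (List.replicate n x)

/-- `x` is nilpotent: `0 ∈ xⁿ` for some `n`. -/
def IsNilpotent (x : H) : Prop := ∃ n : ℕ, (0 : H) ∈ hpow mul x n

/-- `x` is a regular element: `x ∈ x² ∘ y` for some `y`. -/
def IsRegularElem (x : H) : Prop := ∃ y : H, x ∈ ⋃ t ∈ sq mul x, mul t y

/-- The hyperideal generated by a set `S`. -/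
def span (S : Set H) : Set H := ⋂₀ {Q : Set H | IsIdeal mul Q ∧ S ⊆ Q}

/-- `P` is a maximal hyperideal. -/
def IsMaximal (P : Set H) : Prop :=
  IsIdeal mul P ∧ P ≠ Set.univ ∧
    ∀ B : Set H, IsIdeal mul B → P ⊆ B → B = P ∨ B = Set.univ

end Hyper


section Aux

open Hyper

variable {H : Type*} [AddCommGroup H]

lemma aux_neg_mem {mul : H → H → Set H} {P : Set H} (hP : IsIdeal mul P) {a : H}
    (ha : a ∈ P) : -a ∈ P := by
  simpa using hP.2.1 0 hP.1 a ha

lemma aux_add_mem {mul : H → H → Set H} {P : Set H} (hP : IsIdeal mul P) {a b : H}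
    (ha : a ∈ P) (hb : b ∈ P) : a + b ∈ P := by
  simpa [sub_neg_eq_add] using hP.2.1 a ha (-b) (aux_neg_mem hP hb)

lemma aux_sub_subset {mul : H → H → Set H} {P : Set H} (hP : IsIdeal mul P) {A B : Set H}
    (hA : A ⊆ P) (hB : B ⊆ P) : A - B ⊆ P := by
  intro t ht
  rw [Set.mem_sub] at ht
  obtain ⟨u, hu, v, hv, rfl⟩ := ht
  exact hP.2.1 u (hA hu) v (hB hv)

lemma aux_exists_ne_zero {mul : H → H → Set H} {P : Set H} (hP : IsIdeal mul P)
    (h0 : P ≠ ({0} : Set H)) : ∃ p ∈ P, p ≠ 0 := by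
  by_contra h
  push_neg at h
  exact h0 (Set.eq_singleton_iff_unique_mem.2 ⟨hP.1, h⟩)

omit [AddCommGroup H] in
lemma aux_hprod_singleton (mul : H → H → Set H) (a b : H) :
    hprod mul a [b] = mul a b := by
  simp [hprod]

lemma aux_sq_neg (M : MulHyperring H) (a : H) : sq M.hmul (-a) = sq M.hmul a := by
  unfold Hyper.sq
  rw [M.hmul_neg, M.hmul_comm, M.hmul_neg, neg_neg]

lemma aux_isSum_two (mul : H → H → Set H) {A B : Set H} (hA : IsProduct mul A)
    (hB : IsProduct mul B) : IsSum mul (A + B) :=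
  ⟨[A, B], by simp, by rintro C hC; simp at hC; rcases hC with rfl | rfl <;> assumption,
    by simp⟩

lemma aux_sqsub_self (M : MulHyperring H) {P : Set H} (hP : IsStrongCIdeal M.hmul P)
    (a : H) : sq M.hmul a - sq M.hmul a ⊆ P := by
  have hD : sq M.hmul a - sq M.hmul a = M.hmul a a + M.hmul a (-a) := by
    rw [M.hmul_neg, sub_eq_add_neg]
    rfl
  rw [hD]
  obtain ⟨u, hu⟩ := M.hmul_nonempty a a
  refine hP.2 _ (aux_isSum_two M.hmul ⟨a, [a], (aux_hprod_singleton M.hmul a a).symm⟩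
    ⟨a, [-a], (aux_hprod_singleton M.hmul a (-a)).symm⟩) ⟨0, ?_, hP.1.1⟩
  have : (0 : H) = u + -u := by abel
  rw [this]
  exact Set.add_mem_add hu (by rw [M.hmul_neg]; exact Set.neg_mem_neg.2 hu)

lemma aux_two_mem (M : MulHyperring H) {P : Set H} (hP : IsStrongCIdeal M.hmul P) {e : H}
    (he : ∀ x : H, x ∈ M.hmul x e) (h2 : e + e ∈ P) (b : H) : b + b ∈ P := by
  obtain ⟨t, ht⟩ := M.hmul_nonempty b (e + e)
  have hD : IsSum M.hmul (M.hmul b e + M.hmul b e) :=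
    aux_isSum_two M.hmul ⟨b, [e], (aux_hprod_singleton M.hmul b e).symm⟩
      ⟨b, [e], (aux_hprod_singleton M.hmul b e).symm⟩
  have hsub := hP.2 _ hD ⟨t, M.hmul_distrib b e e ht, hP.1.2.2 b (e + e) h2 ht⟩
  exact hsub (Set.add_mem_add (he b) (he b))

lemma aux_flip {mul : H → H → Set H} {P : Set H} (hP : IsIdeal mul P)
    (h2 : ∀ b : H, b + b ∈ P) (a b : H) : a - b ∈ P ↔ a + b ∈ P := by
  constructor
  · intro h
    have : a + b = (a - b) + (b + b) := by abel
    rw [this]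
    exact aux_add_mem hP h (h2 b)
  · intro h
    have : a - b = (a + b) - (b + b) := by abel
    rw [this]
    exact hP.2.1 _ h _ (h2 b)

lemma aux_sq_subset_mem (M : MulHyperring H) {P : Set H} (hsdf : IsSdf M.hmul P)
    (h0 : P ≠ ({0} : Set H)) {y : H} (hy : sq M.hmul y ⊆ P) : y ∈ P := by
  rcases eq_or_ne y 0 with rfl | hy0
  · exact hsdf.1.1
  obtain ⟨p, hp, hp0⟩ := aux_exists_ne_zero hsdf.1 h0
  have hsqp : sq M.hmul p ⊆ P := hsdf.1.2.2 p p hp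
  have hsub : sq M.hmul y - sq M.hmul p ⊆ P := aux_sub_subset hsdf.1 hy hsqp
  rcases hsdf.2.2 y p hy0 hp0 hsub with h | h
  · have := aux_add_mem hsdf.1 h hp
    simpa using this
  · have := hsdf.1.2.1 _ h _ hp
    simpa using this

lemma aux_lemA (M : MulHyperring H) {P : Set H} (hsdf : IsSdf M.hmul P)
    (h0 : P ≠ ({0} : Set H)) (x y : H)
    (h : sq M.hmul x - sq M.hmul y ⊆ P) : x - y ∈ P ∨ x + y ∈ P := by
  have hsq0 : sq M.hmul (0 : H) ⊆ P := hsdf.1.2.2 0 0 hsdf.1.1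
  rcases eq_or_ne x 0 with rfl | hx0
  · rcases eq_or_ne y 0 with rfl | hy0
    · left; simpa using hsdf.1.1
    · -- x = 0 : show sq y ⊆ P, hence y ∈ P
      have hsqy : sq M.hmul y ⊆ P := by
        intro b hb
        obtain ⟨a, ha⟩ := M.hmul_nonempty (0 : H) 0
        have hab : a - b ∈ P := h (Set.sub_mem_sub ha hb)
        have : b = a - (a - b) := by abel
        rw [this]
        exact hsdf.1.2.1 a (hsq0 ha) _ hab
      have hyP : y ∈ P := aux_sq_subset_mem M hsdf h0 hsqy
      left
      rw [zero_sub]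
      exact aux_neg_mem hsdf.1 hyP
  · rcases eq_or_ne y 0 with rfl | hy0
    · have hsqx : sq M.hmul x ⊆ P := by
        intro a ha
        obtain ⟨b, hb⟩ := M.hmul_nonempty (0 : H) 0
        have hab : a - b ∈ P := h (Set.sub_mem_sub ha hb)
        have : a = (a - b) + b := by abel
        rw [this]
        exact aux_add_mem hsdf.1 hab (hsq0 hb)
      left
      rw [sub_zero]
      exact aux_sq_subset_mem M hsdf h0 hsqx
    · exact hsdf.2.2 x y hx0 hy0 h

lemma aux_prod_sub {H₁ H₂ : Type*} [AddCommGroup H₁] [AddCommGroup H₂]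
    (A C : Set H₁) (B D : Set H₂) :
    (A ×ˢ B) - (C ×ˢ D) = (A - C) ×ˢ (B - D) := by
  ext ⟨p, q⟩
  simp only [Set.mem_sub, Set.mem_prod, Prod.exists]
  constructor
  · rintro ⟨u, s, ⟨hu, hs⟩, v, t, ⟨hv, ht⟩, h⟩
    rw [Prod.mk_sub_mk, Prod.mk.injEq] at h
    exact ⟨⟨u, hu, v, hv, h.1⟩, ⟨s, hs, t, ht, h.2⟩⟩
  · rintro ⟨⟨u, hu, v, hv, h1⟩, ⟨s, hs, t, ht, h2⟩⟩
    exact ⟨u, s, ⟨hu, hs⟩, v, t, ⟨hv, ht⟩, by rw [Prod.mk_sub_mk, h1, h2]⟩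

end Aux

/-- Componentwise hypermultiplication on a product. -/
def prodMul {H₁ H₂ : Type*} (m₁ : H₁ → H₁ → Set H₁) (m₂ : H₂ → H₂ → Set H₂) :
    H₁ × H₂ → H₁ × H₂ → Set (H₁ × H₂) :=
  fun a b => (m₁ a.1 b.1) ×ˢ (m₂ a.2 b.2)

/-- `P₁ × P₂` is sdf-absorbing in `H₁ × H₂` iff `P₁` and `P₂` are
sdf-absorbing and `1 + 1 ∈ P₁` or `1 + 1 ∈ P₂`. -/
theorem stmt14 {H₁ H₂ : Type*} [AddCommGroup H₁] [AddCommGroup H₂]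
    (M₁ : MulHyperring H₁) (M₂ : MulHyperring H₂)
    (e₁ : H₁) (he₁ : ∀ x : H₁, x ∈ M₁.hmul x e₁)
    (e₂ : H₂) (he₂ : ∀ x : H₂, x ∈ M₂.hmul x e₂)
    (P₁ : Set H₁) (P₂ : Set H₂)
    (h₁ : Hyper.IsStrongCIdeal M₁.hmul P₁) (h₁0 : P₁ ≠ ({0} : Set H₁))
    (h₁p : P₁ ≠ Set.univ)
    (h₂ : Hyper.IsStrongCIdeal M₂.hmul P₂) (h₂0 : P₂ ≠ ({0} : Set H₂))
    (h₂p : P₂ ≠ Set.univ) :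
    Hyper.IsSdf (prodMul M₁.hmul M₂.hmul) (P₁ ×ˢ P₂) ↔
      (Hyper.IsSdf M₁.hmul P₁ ∧ Hyper.IsSdf M₂.hmul P₂ ∧
        (e₁ + e₁ ∈ P₁ ∨ e₂ + e₂ ∈ P₂)) := by
  constructor
  · intro hP
    obtain ⟨p₁, hp₁, hp₁0⟩ := aux_exists_ne_zero h₁.1 h₁0
    obtain ⟨p₂, hp₂, hp₂0⟩ := aux_exists_ne_zero h₂.1 h₂0
    have he₁0 : e₁ ≠ 0 := by
      intro h
      exact h₁p (Set.eq_univ_of_forall fun x => h₁.1.2.2 x 0 h₁.1.1 (h ▸ he₁ x))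
    have he₂0 : e₂ ≠ 0 := by
      intro h
      exact h₂p (Set.eq_univ_of_forall fun x => h₂.1.2.2 x 0 h₂.1.1 (h ▸ he₂ x))
    refine ⟨⟨h₁.1, h₁p, ?_⟩, ⟨h₂.1, h₂p, ?_⟩, ?_⟩
    · intro x y hx hy hs
      have hc₂ : Hyper.sq M₂.hmul p₂ - Hyper.sq M₂.hmul p₂ ⊆ P₂ :=
        aux_sub_subset h₂.1 (h₂.1.2.2 p₂ p₂ hp₂) (h₂.1.2.2 p₂ p₂ hp₂)
      have key : Hyper.sq (prodMul M₁.hmul M₂.hmul) (x, p₂) -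
          Hyper.sq (prodMul M₁.hmul M₂.hmul) (y, p₂) =
          (Hyper.sq M₁.hmul x - Hyper.sq M₁.hmul y) ×ˢ
            (Hyper.sq M₂.hmul p₂ - Hyper.sq M₂.hmul p₂) := aux_prod_sub _ _ _ _
      have hne1 : ((x, p₂) : H₁ × H₂) ≠ 0 := by
        intro h; exact hx (by simpa using congrArg Prod.fst h)
      have hne2 : ((y, p₂) : H₁ × H₂) ≠ 0 := by
        intro h; exact hy (by simpa using congrArg Prod.fst h)
      rcases hP.2.2 (x, p₂) (y, p₂) hne1 hne2
          (by rw [key]; exact Set.prod_mono hs hc₂) with h | h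
      · exact Or.inl h.1
      · exact Or.inr h.1
    · intro x y hx hy hs
      have hc₁ : Hyper.sq M₁.hmul p₁ - Hyper.sq M₁.hmul p₁ ⊆ P₁ :=
        aux_sub_subset h₁.1 (h₁.1.2.2 p₁ p₁ hp₁) (h₁.1.2.2 p₁ p₁ hp₁)
      have key : Hyper.sq (prodMul M₁.hmul M₂.hmul) (p₁, x) -
          Hyper.sq (prodMul M₁.hmul M₂.hmul) (p₁, y) =
          (Hyper.sq M₁.hmul p₁ - Hyper.sq M₁.hmul p₁) ×ˢ
            (Hyper.sq M₂.hmul x - Hyper.sq M₂.hmul y) := aux_prod_sub _ _ _ _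
      have hne1 : ((p₁, x) : H₁ × H₂) ≠ 0 := by
        intro h; exact hx (by simpa using congrArg Prod.snd h)
      have hne2 : ((p₁, y) : H₁ × H₂) ≠ 0 := by
        intro h; exact hy (by simpa using congrArg Prod.snd h)
      rcases hP.2.2 (p₁, x) (p₁, y) hne1 hne2
          (by rw [key]; exact Set.prod_mono hc₁ hs) with h | h
      · exact Or.inl h.2
      · exact Or.inr h.2
    · have hA : Hyper.sq M₁.hmul e₁ - Hyper.sq M₁.hmul (-e₁) ⊆ P₁ := by
        rw [aux_sq_neg]; exact aux_sqsub_self M₁ h₁ e₁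
      have hB : Hyper.sq M₂.hmul e₂ - Hyper.sq M₂.hmul e₂ ⊆ P₂ :=
        aux_sqsub_self M₂ h₂ e₂
      have key : Hyper.sq (prodMul M₁.hmul M₂.hmul) (e₁, e₂) -
          Hyper.sq (prodMul M₁.hmul M₂.hmul) (-e₁, e₂) =
          (Hyper.sq M₁.hmul e₁ - Hyper.sq M₁.hmul (-e₁)) ×ˢ
            (Hyper.sq M₂.hmul e₂ - Hyper.sq M₂.hmul e₂) := aux_prod_sub _ _ _ _
      have hne1 : ((e₁, e₂) : H₁ × H₂) ≠ 0 := by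
        intro h; exact he₁0 (by simpa using congrArg Prod.fst h)
      have hne2 : ((-e₁, e₂) : H₁ × H₂) ≠ 0 := by
        intro h; exact he₂0 (by simpa using congrArg Prod.snd h)
      rcases hP.2.2 (e₁, e₂) (-e₁, e₂) hne1 hne2
          (by rw [key]; exact Set.prod_mono hA hB) with h | h
      · left
        have h1 := h.1
        simpa [sub_neg_eq_add] using h1
      · right
        exact h.2
  · rintro ⟨hs₁, hs₂, h2e⟩
    refine ⟨⟨⟨hs₁.1.1, hs₂.1.1⟩, ?_, ?_⟩, ?_, ?_⟩
    · rintro ⟨a₁, a₂⟩ ⟨ha1, ha2⟩ ⟨b₁, b₂⟩ ⟨hb1, hb2⟩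
      exact ⟨hs₁.1.2.1 a₁ ha1 b₁ hb1, hs₂.1.2.1 a₂ ha2 b₂ hb2⟩
    · rintro r x hx ⟨t₁, t₂⟩ ⟨ht1, ht2⟩
      exact ⟨hs₁.1.2.2 r.1 x.1 hx.1 ht1, hs₂.1.2.2 r.2 x.2 hx.2 ht2⟩
    · intro h
      obtain ⟨a, ha⟩ := Set.ne_univ_iff_exists_notMem _ |>.1 h₁p
      exact ha ((h.symm ▸ Set.mem_univ ((a, 0) : H₁ × H₂)) :
        ((a, 0) : H₁ × H₂) ∈ P₁ ×ˢ P₂).1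
    · intro x y hx hy hsub
      have key : Hyper.sq (prodMul M₁.hmul M₂.hmul) x -
          Hyper.sq (prodMul M₁.hmul M₂.hmul) y =
          (Hyper.sq M₁.hmul x.1 - Hyper.sq M₁.hmul y.1) ×ˢ
            (Hyper.sq M₂.hmul x.2 - Hyper.sq M₂.hmul y.2) := aux_prod_sub _ _ _ _
      rw [key] at hsub
      have c₁ : Hyper.sq M₁.hmul x.1 - Hyper.sq M₁.hmul y.1 ⊆ P₁ := by
        intro a ha
        obtain ⟨u, hu⟩ := M₂.hmul_nonempty x.2 x.2
        obtain ⟨v, hv⟩ := M₂.hmul_nonempty y.2 y.2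
        exact (hsub (⟨ha, Set.sub_mem_sub hu hv⟩ :
          (a, u - v) ∈ _ ×ˢ _)).1
      have c₂ : Hyper.sq M₂.hmul x.2 - Hyper.sq M₂.hmul y.2 ⊆ P₂ := by
        intro a ha
        obtain ⟨u, hu⟩ := M₁.hmul_nonempty x.1 x.1
        obtain ⟨v, hv⟩ := M₁.hmul_nonempty y.1 y.1
        exact (hsub (⟨Set.sub_mem_sub hu hv, ha⟩ :
          (u - v, a) ∈ _ ×ˢ _)).2
      have d₁ := aux_lemA M₁ hs₁ h₁0 x.1 y.1 c₁
      have d₂ := aux_lemA M₂ hs₂ h₂0 x.2 y.2 c₂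
      rcases h2e with h2 | h2
      · have hfl := aux_flip hs₁.1 (aux_two_mem M₁ h₁ he₁ h2) x.1 y.1
        have b₁ : x.1 - y.1 ∈ P₁ ∧ x.1 + y.1 ∈ P₁ := by
          rcases d₁ with h | h
          · exact ⟨h, hfl.1 h⟩
          · exact ⟨hfl.2 h, h⟩
        rcases d₂ with h | h
        · exact Or.inl ⟨b₁.1, h⟩
        · exact Or.inr ⟨b₁.2, h⟩
      · have hfl := aux_flip hs₂.1 (aux_two_mem M₂ h₂ he₂ h2) x.2 y.2
        have b₂ : x.2 - y.2 ∈ P₂ ∧ x.2 + y.2 ∈ P₂ := by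
          rcases d₂ with h | h
          · exact ⟨h, hfl.1 h⟩
          · exact ⟨hfl.2 h, h⟩
        rcases d₁ with h | h
        · exact Or.inl ⟨h, b₂.1⟩
        · exact Or.inr ⟨h, b₂.2⟩
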